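/- Let Ω ⊂ ℝⁿ be a convex set and ρ a metric on Ω such that every Euclidean line segment in Ω is a geodesic of (Ω,ρ). Fix ε > 0 and set c_ε(x,y) := ρ(x,y) + ε|x−y|². Let π be a finite Borel measure on Ω² concentrated on a c_ε-cyclically monotone set, whose second marginal has finite support and whose first marginal is absolutely continuous with respect to ℒⁿ. Then for every t ∈ [0,1), the interpolated measure (P_t)♯π is absolutely continuous with respect to ℒⁿ; moreover, if the density f of the first marginal is essentially bounded, then the density of (P_t)♯π is essentially bounded with ‖d(P_t)♯π/dℒⁿ‖_{L∞} ≤ (1−t)^{−n}‖f‖_{L∞}. -/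

import Mathlib

open MeasureTheory Set Metric Filter Topology ENNReal NNReal

noncomputable section

/-- `n`-dimensional Euclidean space. -/
abbrev Eucl (n : ℕ) := EuclideanSpace ℝ (Fin n)

/-- `ρ` is a metric on the set `Ω`. -/
def IsMetricOn {n : ℕ} (Ω : Set (Eucl n)) (ρ : Eucl n → Eucl n → ℝ) : Prop :=
  (∀ x ∈ Ω, ∀ y ∈ Ω, 0 ≤ ρ x y) ∧
  (∀ x ∈ Ω, ∀ y ∈ Ω, (ρ x y = 0 ↔ x = y)) ∧
  (∀ x ∈ Ω, ∀ y ∈ Ω, ρ x y = ρ y x) ∧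
  (∀ x ∈ Ω, ∀ y ∈ Ω, ∀ z ∈ Ω, ρ x z ≤ ρ x y + ρ y z)

/-- Every Euclidean line segment in `Ω` is a geodesic of `(Ω, ρ)`. -/
def SegmentsAreGeodesics {n : ℕ} (Ω : Set (Eucl n)) (ρ : Eucl n → Eucl n → ℝ) : Prop :=
  ∀ x ∈ Ω, ∀ y ∈ Ω, ∀ s ∈ Icc (0:ℝ) 1, ∀ t ∈ Icc (0:ℝ) 1,
    ρ ((1-s) • x + s • y) ((1-t) • x + t • y) = |t - s| * ρ x y

/-- The ball of `(Ω, ρ)` centred at `x` with radius `r`. -/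
def rhoBall {n : ℕ} (Ω : Set (Eucl n)) (ρ : Eucl n → Eucl n → ℝ) (x : Eucl n) (r : ℝ) :
    Set (Eucl n) :=
  {y ∈ Ω | ρ x y < r}

/-- The Lebesgue measure is locally doubling on `(Ω, ρ)`. -/
def LocallyDoubling {n : ℕ} (Ω : Set (Eucl n)) (ρ : Eucl n → Eucl n → ℝ) : Prop :=
  ∀ R > 0, ∃ C : ℝ, 1 ≤ C ∧ ∀ x ∈ Ω, ∀ r : ℝ, 0 < r → r ≤ R →
    volume (rhoBall Ω ρ x (2*r)) ≤ ENNReal.ofReal C * volume (rhoBall Ω ρ x r)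

/-- Assumption A of the paper: (i) the topology of `ρ` on `Ω` is the Euclidean one,
(ii) Euclidean segments are geodesics, (iii) Lebesgue measure is locally doubling. -/
def AssumptionA {n : ℕ} (Ω : Set (Eucl n)) (ρ : Eucl n → Eucl n → ℝ) : Prop :=
  (∀ x ∈ Ω, ∀ ε > 0, ∃ δ > 0, ∀ y ∈ Ω, dist x y < δ → ρ x y < ε) ∧
  (∀ x ∈ Ω, ∀ ε > 0, ∃ δ > 0, ∀ y ∈ Ω, ρ x y < δ → dist x y < ε) ∧
  SegmentsAreGeodesics Ω ρ ∧
  LocallyDoubling Ω ρ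

/-- The (topological) support of a Borel measure: points all of whose neighbourhoods have
positive measure. -/
def msupport {α : Type*} [TopologicalSpace α] [MeasurableSpace α] (μ : Measure α) : Set α :=
  {x | ∀ U ∈ nhds x, μ U ≠ 0}

/-- A set `Γ` is `c`-cyclically monotone for a real-valued cost `c`. -/
def CyclicallyMonotoneR {α : Type*} (c : α → α → ℝ) (Γ : Set (α × α)) : Prop :=
  ∀ (m : ℕ) (p : Fin (m+1) → α × α), (∀ i, p i ∈ Γ) →
    ∑ i, c (p i).1 (p i).2 ≤ ∑ i, c (p i).1 (p (i+1)).2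

/-- The interpolation map `P_t(x, y) = (1-t) x + t y`. -/
def interpMap {n : ℕ} (t : ℝ) : Eucl n × Eucl n → Eucl n :=
  fun p => (1-t) • p.1 + t • p.2

lemma msupport_compl_null {α : Type*} [TopologicalSpace α] [MeasurableSpace α]
    [SecondCountableTopology α] (μ : Measure α) :
    μ (msupport μ)ᶜ = 0 := by
  obtain ⟨T, hTc, hTsub, hTU⟩ :=
    TopologicalSpace.isOpen_sUnion_countable {U : Set α | IsOpen U ∧ μ U = 0}
      (fun U hU => hU.1)
  have hsub : (msupport μ)ᶜ ⊆ ⋃₀ T := by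
    rw [hTU]
    intro x hx
    simp only [msupport, mem_compl_iff, mem_setOf_eq, not_forall] at hx
    obtain ⟨U, hU, hμU⟩ := hx
    obtain ⟨V, hVU, hVopen, hxV⟩ := mem_nhds_iff.mp hU
    exact ⟨V, ⟨hVopen, measure_mono_null hVU (not_not.mp hμU)⟩, hxV⟩
  refine measure_mono_null hsub (measure_sUnion_null_iff hTc |>.mpr ?_)
  exact fun s hs => (hTsub hs).2

lemma norm_smul_add_sq {n : ℕ} (u v : Eucl n) (s r : ℝ) :
    ‖s • u + r • v‖^2 = s^2*‖u‖^2 + 2*(s*r)*(inner ℝ u v : ℝ) + r^2*‖v‖^2 := by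
  rw [norm_add_sq_real, norm_smul, norm_smul, real_inner_smul_left, real_inner_smul_right,
    mul_pow, mul_pow, Real.norm_eq_abs, Real.norm_eq_abs, sq_abs, sq_abs]
  ring

set_option maxHeartbeats 1000000 in
lemma interp_inj {n : ℕ} {Ω : Set (Eucl n)} (hconv : Convex ℝ Ω)
    {ρ : Eucl n → Eucl n → ℝ} (hmet : IsMetricOn Ω ρ) (hgeo : SegmentsAreGeodesics Ω ρ)
    {ε : ℝ} (hε : 0 < ε) {Γ : Set (Eucl n × Eucl n)} (hΓΩ : Γ ⊆ Ω ×ˢ Ω)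
    (hΓmono : CyclicallyMonotoneR (fun x y => ρ x y + ε * ‖x - y‖^2) Γ)
    {t : ℝ} (ht0 : 0 < t) (ht1 : t < 1) {p q : Eucl n × Eucl n}
    (hp : p ∈ Γ) (hq : q ∈ Γ) (heq : interpMap t p = interpMap t q) : p = q := by
  obtain ⟨x₁, y₁⟩ := p
  obtain ⟨x₂, y₂⟩ := q
  have hx₁ : x₁ ∈ Ω := (hΓΩ hp).1
  have hy₁ : y₁ ∈ Ω := (hΓΩ hp).2
  have hx₂ : x₂ ∈ Ω := (hΓΩ hq).1
  have hy₂ : y₂ ∈ Ω := (hΓΩ hq).2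
  have h : (1-t) • x₁ + t • y₁ = (1-t) • x₂ + t • y₂ := heq
  have ht0' : (0:ℝ) ≤ t := ht0.le
  have ht1' : t ≤ 1 := ht1.le
  have h1t : (0:ℝ) < 1 - t := by linarith
  set z : Eucl n := (1-t) • x₁ + t • y₁ with hz
  have hzΩ : z ∈ Ω := hconv hx₁ hy₁ (by linarith) ht0' (by ring)
  -- geodesic identities
  have g1 : ρ x₁ z = t * ρ x₁ y₁ := by
    have := hgeo x₁ hx₁ y₁ hy₁ 0 ⟨le_refl _, zero_le_one⟩ t ⟨ht0', ht1'⟩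
    simpa [abs_of_pos ht0] using this
  have g2 : ρ z y₂ = (1-t) * ρ x₂ y₂ := by
    have := hgeo x₂ hx₂ y₂ hy₂ t ⟨ht0', ht1'⟩ 1 ⟨zero_le_one, le_refl _⟩
    rw [h]
    simpa [abs_of_pos h1t] using this
  have g3 : ρ x₂ z = t * ρ x₂ y₂ := by
    have := hgeo x₂ hx₂ y₂ hy₂ 0 ⟨le_refl _, zero_le_one⟩ t ⟨ht0', ht1'⟩
    rw [h]
    simpa [abs_of_pos ht0] using this
  have g4 : ρ z y₁ = (1-t) * ρ x₁ y₁ := by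
    have := hgeo x₁ hx₁ y₁ hy₁ t ⟨ht0', ht1'⟩ 1 ⟨zero_le_one, le_refl _⟩
    simpa [abs_of_pos h1t] using this
  have tri1 : ρ x₁ y₂ ≤ t * ρ x₁ y₁ + (1-t) * ρ x₂ y₂ := by
    have := hmet.2.2.2 x₁ hx₁ z hzΩ y₂ hy₂
    rw [g1, g2] at this; exact this
  have tri2 : ρ x₂ y₁ ≤ t * ρ x₂ y₂ + (1-t) * ρ x₁ y₁ := by
    have := hmet.2.2.2 x₂ hx₂ z hzΩ y₁ hy₁
    rw [g3, g4] at this; exact this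
  -- cyclical monotonicity with the two-point cycle
  have cyc := hΓmono 1 (fun i => if i = 0 then (x₁, y₁) else (x₂, y₂))
    (by intro i; fin_cases i <;> simp [hp, hq])
  rw [Fin.sum_univ_two, Fin.sum_univ_two] at cyc
  have e01 : ((0:Fin 2) + 1) = 1 := rfl
  have e11 : ((1:Fin 2) + 1) = 0 := rfl
  simp only [e01, e11, if_pos rfl] at cyc
  norm_num at cyc
  -- vector identities
  have key1 : x₁ - y₂ = t • (x₁ - y₁) + (1-t) • (x₂ - y₂) := by
    linear_combination (norm := module) h
  have key2 : x₂ - y₁ = t • (x₂ - y₂) + (1-t) • (x₁ - y₁) := by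
    linear_combination (norm := module) -h
  have n1 : ‖x₁ - y₂‖^2 = t^2*‖x₁-y₁‖^2 + 2*(t*(1-t))*(inner ℝ (x₁-y₁) (x₂-y₂) : ℝ)
      + (1-t)^2*‖x₂-y₂‖^2 := by rw [key1]; exact norm_smul_add_sq _ _ _ _
  have n2 : ‖x₂ - y₁‖^2 = t^2*‖x₂-y₂‖^2 + 2*(t*(1-t))*(inner ℝ (x₁-y₁) (x₂-y₂) : ℝ)
      + (1-t)^2*‖x₁-y₁‖^2 := by
    rw [key2, norm_smul_add_sq, real_inner_comm]
  have nd : ‖(x₁-y₁) - (x₂-y₂)‖^2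
      = ‖x₁-y₁‖^2 - 2*(inner ℝ (x₁-y₁) (x₂-y₂) : ℝ) + ‖x₂-y₂‖^2 := by
    rw [norm_sub_sq_real]
  have hq3 : ε * (‖x₁-y₁‖^2 + ‖x₂-y₂‖^2) ≤ ε * (‖x₁-y₂‖^2 + ‖x₂-y₁‖^2) := by linarith
  have hq2 : ‖x₁-y₁‖^2 + ‖x₂-y₂‖^2 ≤ ‖x₁-y₂‖^2 + ‖x₂-y₁‖^2 :=
    le_of_mul_le_mul_left hq3 hε
  rw [n1, n2] at hq2
  have hfin : 2*(t*(1-t)) * ‖(x₁-y₁) - (x₂-y₂)‖^2 ≤ 0 := by rw [nd]; linarith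
  have hsq : ‖(x₁-y₁) - (x₂-y₂)‖^2 ≤ 0 := by nlinarith [hfin, mul_pos ht0 h1t]
  have hab : x₁ - y₁ = x₂ - y₂ := by
    have h0 : ‖(x₁-y₁) - (x₂-y₂)‖ = 0 := by
      nlinarith [norm_nonneg ((x₁-y₁) - (x₂-y₂))]
    rw [← sub_eq_zero]
    exact norm_eq_zero.mp h0
  have hx : x₁ = x₂ := by linear_combination (norm := module) h + t • hab
  have hy : y₁ = y₂ := by linear_combination (norm := module) hx - hab
  simp [hx, hy]

set_option maxHeartbeats 1000000

/-- Let `Ω ⊆ ℝⁿ` be convex and `ρ` a metric on `Ω` for which Euclidean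
segments are geodesics; let `c_ε(x,y) = ρ(x,y) + ε|x-y|²`.  If a finite Borel measure `π` on
`Ω²` is concentrated on a `c_ε`-cyclically monotone set, has finitely supported second
marginal and absolutely continuous first marginal, then `(P_t)♯π ≪ ℒⁿ` for every
`t ∈ [0, 1)`, and if the density of the first marginal is essentially bounded then the density
of `(P_t)♯π` is bounded by `(1-t)^{-n}` times the bound. -/
theorem interpolation_absolutelyContinuous {n : ℕ} (Ω : Set (Eucl n)) (hconv : Convex ℝ Ω)
    (ρ : Eucl n → Eucl n → ℝ) (hmet : IsMetricOn Ω ρ) (hgeo : SegmentsAreGeodesics Ω ρ)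
    (ε : ℝ) (hε : 0 < ε)
    (π : Measure (Eucl n × Eucl n)) [IsFiniteMeasure π] (hπΩ : π ((Ω ×ˢ Ω)ᶜ) = 0)
    (Γ : Set (Eucl n × Eucl n)) (hΓΩ : Γ ⊆ Ω ×ˢ Ω)
    (hΓmono : CyclicallyMonotoneR (fun x y => ρ x y + ε * ‖x - y‖^2) Γ)
    (hconc : π Γᶜ = 0)
    (hsupp : (msupport (π.map Prod.snd)).Finite)
    (hac : π.map Prod.fst ≪ volume) :
    ∀ t : ℝ, 0 ≤ t → t < 1 →
      (π.map (interpMap t) ≪ volume) ∧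
      (essSup ((π.map Prod.fst).rnDeriv volume) volume < ⊤ →
        essSup ((π.map (interpMap t)).rnDeriv volume) volume ≤
          ENNReal.ofReal ((1-t) ^ (-(n:ℤ))) *
            essSup ((π.map Prod.fst).rnDeriv volume) volume) := by
  intro t ht0 ht1
  rcases eq_or_lt_of_le ht0 with ht0' | ht0'
  · -- the case t = 0
    have hmap : (interpMap t : Eucl n × Eucl n → Eucl n) = Prod.fst := by
      funext p; simp [interpMap, ← ht0']
    rw [hmap]
    refine ⟨hac, fun _ => ?_⟩
    have h1 : ENNReal.ofReal ((1-t) ^ (-(n:ℤ))) = 1 := by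
      rw [← ht0']; norm_num
    rw [h1, one_mul]
  · -- the case 0 < t
    have h1t : (0:ℝ) < 1 - t := by linarith
    set μ : Measure (Eucl n) := π.map Prod.fst with hμdef
    haveI : IsFiniteMeasure μ := by
      constructor
      rw [hμdef, Measure.map_apply measurable_fst MeasurableSet.univ]
      exact measure_lt_top π _
    have hinterp_meas : Measurable (interpMap (n := n) t) :=
      (measurable_fst.const_smul (1-t)).add (measurable_snd.const_smul t)
    -- a measurable subset of Γ with null complement
    obtain ⟨N, hΓN, hNmeas, hNnull⟩ := exists_measurable_superset_of_null hconc
    set Γ' : Set (Eucl n × Eucl n) := Nᶜ with hΓ'def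
    have hΓ'meas : MeasurableSet Γ' := hNmeas.compl
    have hΓ'sub : Γ' ⊆ Γ := compl_subset_comm.mpr hΓN
    have hΓ'null : π Γ'ᶜ = 0 := by rwa [hΓ'def, compl_compl]
    -- the support of the second marginal
    have hSmeas : MeasurableSet (msupport (π.map Prod.snd)) := hsupp.measurableSet
    have hπS : π (Prod.snd ⁻¹' (msupport (π.map Prod.snd))ᶜ) = 0 := by
      rw [← Measure.map_apply measurable_snd hSmeas.compl]
      exact msupport_compl_null _
    set S' : Finset (Eucl n) := hsupp.toFinset with hS'def
    -- the scaling constant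
    set c : ℝ≥0∞ := ENNReal.ofReal ((1-t) ^ (-(n:ℤ))) with hcdef
    have hTmeas : ∀ y : Eucl n, Measurable (fun x : Eucl n => (1-t) • x + t • y) :=
      fun y => (measurable_id.const_smul (1-t)).add_const _
    have hTvol : ∀ (y : Eucl n) (F : Set (Eucl n)),
        volume ((fun x : Eucl n => (1-t) • x + t • y) ⁻¹' F) = c * volume F := by
      intro y F
      have hrw : (fun x : Eucl n => (1-t) • x + t • y) ⁻¹' F
          = ((1-t) • ·) ⁻¹' ((· + t • y) ⁻¹' F) := rfl
      rw [hrw, Measure.addHaar_preimage_smul volume (ne_of_gt h1t),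
        measure_preimage_add_right]
      congr 2
      rw [finrank_euclideanSpace_fin, abs_of_nonneg (by positivity), zpow_neg, zpow_natCast]
    -- the measurable sections of Γ' and the relevant sets
    set D : Eucl n → Set (Eucl n) → Set (Eucl n) :=
      fun y E => ((fun x : Eucl n => (x, y)) ⁻¹' Γ')
        ∩ ((fun x : Eucl n => (1-t) • x + t • y) ⁻¹' E) with hDdef
    have hDmeas : ∀ (y : Eucl n) (E : Set (Eucl n)), MeasurableSet E →
        MeasurableSet (D y E) := fun y E hE =>
      (hΓ'meas.preimage measurable_prodMk_right).inter (hE.preimage (hTmeas y))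
    -- the key estimate
    have key : ∀ E : Set (Eucl n), MeasurableSet E →
        (π.map (interpMap t)) E ≤ ∑ y ∈ S', μ (D y E) := by
      intro E hE
      have hcover : (interpMap t) ⁻¹' E ⊆
          (⋃ y ∈ S', (D y E) ×ˢ ({y} : Set (Eucl n)))
            ∪ Γ'ᶜ ∪ Prod.snd ⁻¹' (msupport (π.map Prod.snd))ᶜ := by
        intro p hpE
        by_cases hpΓ : p ∈ Γ'
        · by_cases hpS : p.2 ∈ msupport (π.map Prod.snd)
          · left; left
            refine mem_iUnion₂.mpr ⟨p.2, by simp [hS'def, hsupp.mem_toFinset, hpS], ?_⟩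
            refine ⟨⟨?_, ?_⟩, rfl⟩
            · show (p.1, p.2) ∈ Γ'
              rwa [Prod.mk.eta]
            · exact hpE
          · right; exact hpS
        · left; right; exact hpΓ
      rw [Measure.map_apply hinterp_meas hE]
      calc π ((interpMap t) ⁻¹' E)
          ≤ π ((⋃ y ∈ S', (D y E) ×ˢ ({y} : Set (Eucl n))) ∪ Γ'ᶜ
              ∪ Prod.snd ⁻¹' (msupport (π.map Prod.snd))ᶜ) := measure_mono hcover
        _ ≤ π (⋃ y ∈ S', (D y E) ×ˢ ({y} : Set (Eucl n))) + π Γ'ᶜ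
              + π (Prod.snd ⁻¹' (msupport (π.map Prod.snd))ᶜ) :=
            le_trans (measure_union_le _ _) (by gcongr; exact measure_union_le _ _)
        _ = π (⋃ y ∈ S', (D y E) ×ˢ ({y} : Set (Eucl n))) := by
            rw [hΓ'null, hπS, add_zero, add_zero]
        _ ≤ ∑ y ∈ S', π ((D y E) ×ˢ ({y} : Set (Eucl n))) := measure_biUnion_finset_le _ _
        _ ≤ ∑ y ∈ S', μ (D y E) := by
            refine Finset.sum_le_sum fun y _ => ?_
            rw [hμdef, Measure.map_apply measurable_fst (hDmeas y E hE)]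
            exact measure_mono fun p hp => hp.1
    constructor
    · -- absolute continuity
      refine Measure.AbsolutelyContinuous.mk fun E hE hvolE => ?_
      refine le_antisymm (le_trans (key E hE) ?_) zero_le
      refine le_of_eq (Finset.sum_eq_zero fun y _ => ?_)
      refine measure_mono_null inter_subset_right (hac ?_)
      rw [hTvol y E, hvolE, mul_zero]
    · -- the essential supremum bound
      intro _
      set f : Eucl n → ℝ≥0∞ := μ.rnDeriv volume with hfdef
      set M : ℝ≥0∞ := essSup f volume with hMdef
      have hμle : ∀ A : Set (Eucl n), MeasurableSet A → μ A ≤ M * volume A := by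
        intro A hA
        rw [← Measure.setLIntegral_rnDeriv hac A]
        calc ∫⁻ x in A, f x ∂volume
            ≤ ∫⁻ _ in A, M ∂volume :=
              lintegral_mono_ae (ae_restrict_of_ae (ae_le_essSup f))
          _ = M * volume A := by rw [setLIntegral_const]
      -- the inverse affine maps
      set Sy : Eucl n → Eucl n → Eucl n := fun y z => (1-t)⁻¹ • (z - t • y) with hSydef
      have hSymeas : ∀ y, Measurable (Sy y) :=
        fun y => (measurable_const_smul ((1-t)⁻¹)).comp (measurable_id.sub_const _)
      have hTS : ∀ y z, (1-t) • (Sy y z) + t • y = z := by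
        intro y z
        rw [hSydef]
        simp only
        rw [smul_smul, mul_inv_cancel₀ (ne_of_gt h1t), one_smul, sub_add_cancel]
      have hST : ∀ y x, Sy y ((1-t) • x + t • y) = x := by
        intro y x
        rw [hSydef]
        simp only
        rw [add_sub_cancel_right, smul_smul, inv_mul_cancel₀ (ne_of_gt h1t), one_smul]
      have hbound : ∀ E : Set (Eucl n), MeasurableSet E →
          (π.map (interpMap t)) E ≤ (c * M) * volume E := by
        intro E hE
        set Ey : Eucl n → Set (Eucl n) := fun y => (Sy y) ⁻¹' (D y E) with hEydef
        have hEymeas : ∀ y, MeasurableSet (Ey y) :=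
          fun y => (hDmeas y E hE).preimage (hSymeas y)
        have hEysub : ∀ y, Ey y ⊆ E := by
          intro y z hz
          have h2 : Sy y z ∈ (fun x : Eucl n => (1-t) • x + t • y) ⁻¹' E := hz.2
          have h3 : (1-t) • (Sy y z) + t • y ∈ E := h2
          rwa [hTS y z] at h3
        have hdisj : Set.Pairwise ↑S' (Function.onFun Disjoint Ey) := by
          intro y₁ _ y₂ _ hne
          rw [Function.onFun, Set.disjoint_left]
          intro z hz₁ hz₂
          apply hne
          have hm₁ : (Sy y₁ z, y₁) ∈ Γ := hΓ'sub hz₁.1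
          have hm₂ : (Sy y₂ z, y₂) ∈ Γ := hΓ'sub hz₂.1
          have heq : interpMap t (Sy y₁ z, y₁) = interpMap t (Sy y₂ z, y₂) := by
            show (1-t) • (Sy y₁ z) + t • y₁ = (1-t) • (Sy y₂ z) + t • y₂
            rw [hTS, hTS]
          have := interp_inj hconv hmet hgeo hε hΓΩ hΓmono ht0' ht1 hm₁ hm₂ heq
          exact congrArg Prod.snd this
        have hDvol : ∀ y, volume (D y E) = c * volume (Ey y) := by
          intro y
          have hpre : (fun x : Eucl n => (1-t) • x + t • y) ⁻¹' (Ey y) = D y E := by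
            ext x
            simp only [hEydef, mem_preimage, hST y x]
          rw [← hpre, hTvol]
        calc (π.map (interpMap t)) E
            ≤ ∑ y ∈ S', μ (D y E) := key E hE
          _ ≤ ∑ y ∈ S', M * volume (D y E) :=
              Finset.sum_le_sum fun y _ => hμle _ (hDmeas y E hE)
          _ = M * c * ∑ y ∈ S', volume (Ey y) := by
              rw [Finset.mul_sum]
              refine Finset.sum_congr rfl fun y _ => ?_
              rw [hDvol y, mul_assoc]
          _ = M * c * volume (⋃ y ∈ S', Ey y) := by
              rw [measure_biUnion_finset hdisj fun y _ => hEymeas y]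
          _ ≤ M * c * volume E := by
              gcongr
              exact iUnion₂_subset fun y _ => hEysub y
          _ = (c * M) * volume E := by ring
      have hrn : (π.map (interpMap t)).rnDeriv volume ≤ᵐ[volume] fun _ => c * M := by
        refine ae_le_of_forall_setLIntegral_le_of_sigmaFinite
          (Measure.measurable_rnDeriv _ _) fun s hs _ => ?_
        calc ∫⁻ x in s, (π.map (interpMap t)).rnDeriv volume x ∂volume
            ≤ (π.map (interpMap t)) s := Measure.setLIntegral_rnDeriv_le s
          _ ≤ (c * M) * volume s := hbound s hs
          _ = ∫⁻ _ in s, (c * M) ∂volume := by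
              rw [setLIntegral_const]
      exact essSup_le_of_ae_le _ hrn
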